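/- There exist differentiable functions F, G on J = (0,1) satisfying [F(b)−F(a)]G'((a+b)/2) = [G(b)−G(a)]F'((a+b)/2) for all a, b ∈ (0,1), such that the sets U_g = {G' ≠ 0} and U_f = {F' ≠ 0} are both nonempty yet disjoint. Concretely, F(x) = c₁ for x ∈ (0, 4/5] and F(x) = (x − 4/5)² + c₁ for x ∈ (4/5, 1), and G(x) = (x − 2/5)² + c₂ for x ∈ (0, 2/5) and G(x) = c₂ for x ∈ [2/5, 1), satisfy these properties. -/

import Mathlib

open Set

private lemma junction_deriv {f : ℝ → ℝ} {c : ℝ} (h : ∀ y, |f y - f c| ≤ (y - c)^2) :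
    HasDerivAt f 0 c := by
  rw [hasDerivAt_iff_isLittleO, Asymptotics.isLittleO_iff]
  intro ε hε
  filter_upwards [Metric.ball_mem_nhds c hε] with y hy
  have hd : |y - c| < ε := by simpa [Real.dist_eq] using hy
  have hb := h y
  calc ‖f y - f c - (y - c) • (0:ℝ)‖ = |f y - f c| := by
        simp [Real.norm_eq_abs]
    _ ≤ (y - c)^2 := hb
    _ = |y - c| * |y - c| := by rw [← sq_abs]; ring
    _ ≤ ε * ‖y - c‖ := by
        rw [Real.norm_eq_abs]
        exact mul_le_mul_of_nonneg_right hd.le (abs_nonneg _)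

private lemma hasDerivF (c₁ : ℝ) (x : ℝ) :
    HasDerivAt (fun x : ℝ => if x ≤ 4/5 then c₁ else (x - 4/5)^2 + c₁)
      (if x ≤ (4:ℝ)/5 then 0 else 2*(x - 4/5)) x := by
  rcases lt_trichotomy x (4/5) with h | h | h
  · rw [if_pos h.le]
    apply (hasDerivAt_const x c₁).congr_of_eventuallyEq
    filter_upwards [Iio_mem_nhds h] with y hy
    simp [le_of_lt (mem_Iio.1 hy)]
  · subst h
    rw [if_pos le_rfl]
    apply junction_deriv
    intro y
    by_cases hy : y ≤ 4/5
    · simp [hy]; positivity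
    · rw [if_neg hy, if_pos le_rfl, add_sub_cancel_right,
        abs_of_nonneg (by positivity : (0:ℝ) ≤ (y - 4/5)^2)]
  · rw [if_neg (not_le.2 h)]
    have hp : HasDerivAt (fun y : ℝ => (y - 4/5)^2 + c₁) (2*(x - 4/5)) x := by
      have := (((hasDerivAt_id x).sub_const (4/5)).pow 2).add_const c₁
      simpa using this
    apply hp.congr_of_eventuallyEq
    filter_upwards [Ioi_mem_nhds h] with y hy
    simp [not_le.2 (mem_Ioi.1 hy)]

private lemma hasDerivG (c₂ : ℝ) (x : ℝ) :
    HasDerivAt (fun x : ℝ => if x < 2/5 then (x - 2/5)^2 + c₂ else c₂)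
      (if x < (2:ℝ)/5 then 2*(x - 2/5) else 0) x := by
  rcases lt_trichotomy x (2/5) with h | h | h
  · rw [if_pos h]
    have hp : HasDerivAt (fun y : ℝ => (y - 2/5)^2 + c₂) (2*(x - 2/5)) x := by
      have := (((hasDerivAt_id x).sub_const (2/5)).pow 2).add_const c₂
      simpa using this
    apply hp.congr_of_eventuallyEq
    filter_upwards [Iio_mem_nhds h] with y hy
    simp [mem_Iio.1 hy]
  · subst h
    rw [if_neg (lt_irrefl _)]
    apply junction_deriv
    intro y
    by_cases hy : y < 2/5
    · rw [if_pos hy, if_neg (lt_irrefl _), add_sub_cancel_right,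
        abs_of_nonneg (by positivity : (0:ℝ) ≤ (y - 2/5)^2)]
    · simp [hy]; positivity
  · rw [if_neg (not_lt.2 h.le)]
    apply (hasDerivAt_const x c₂).congr_of_eventuallyEq
    filter_upwards [Ioi_mem_nhds h] with y hy
    simp [not_lt.2 (mem_Ioi.1 hy).le]

/-- Example 3.2 -/
theorem stmt_7 (c₁ c₂ : ℝ) :
    let F : ℝ → ℝ := fun x => if x ≤ 4/5 then c₁ else (x - 4/5)^2 + c₁
    let G : ℝ → ℝ := fun x => if x < 2/5 then (x - 2/5)^2 + c₂ else c₂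
    (∀ x ∈ Set.Ioo (0:ℝ) 1, DifferentiableAt ℝ F x ∧ DifferentiableAt ℝ G x) ∧
    (∀ a ∈ Set.Ioo (0:ℝ) 1, ∀ b ∈ Set.Ioo (0:ℝ) 1,
      (F b - F a) * deriv G ((a + b) / 2) = (G b - G a) * deriv F ((a + b) / 2)) ∧
    {x ∈ Set.Ioo (0:ℝ) 1 | deriv F x ≠ 0}.Nonempty ∧
    {x ∈ Set.Ioo (0:ℝ) 1 | deriv G x ≠ 0}.Nonempty ∧
    {x ∈ Set.Ioo (0:ℝ) 1 | deriv F x ≠ 0} ∩ {x ∈ Set.Ioo (0:ℝ) 1 | deriv G x ≠ 0} = ∅ := by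
  intro F G
  have hF : ∀ x, deriv F x = if x ≤ (4:ℝ)/5 then 0 else 2*(x - 4/5) :=
    fun x => (hasDerivF c₁ x).deriv
  have hG : ∀ x, deriv G x = if x < (2:ℝ)/5 then 2*(x - 2/5) else 0 :=
    fun x => (hasDerivG c₂ x).deriv
  refine ⟨fun x _ => ⟨(hasDerivF c₁ x).differentiableAt, (hasDerivG c₂ x).differentiableAt⟩,
    ?_, ?_, ?_, ?_⟩
  · intro a ha b hb
    set m := (a + b) / 2 with hm
    by_cases h1 : m ≤ 4/5
    · rw [hF m, if_pos h1, mul_zero]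
      by_cases h2 : m < 2/5
      · have hab : a + b < 4/5 := by rw [hm] at h2; linarith
        have ha4 : a ≤ 4/5 := by linarith [hb.1]
        have hb4 : b ≤ 4/5 := by linarith [ha.1]
        show (F b - F a) * _ = 0
        simp only [F, if_pos ha4, if_pos hb4]
        ring
      · rw [hG m, if_neg h2, mul_zero]
    · push_neg at h1
      have hab : 8/5 < a + b := by rw [hm] at h1; linarith
      have ha2 : ¬ a < 2/5 := by push_neg; linarith [hb.2]
      have hb2 : ¬ b < 2/5 := by push_neg; linarith [ha.2]
      rw [hG m, if_neg (by push_neg; linarith : ¬ m < 2/5), mul_zero]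
      show 0 = (G b - G a) * _
      simp only [G, if_neg ha2, if_neg hb2]
      ring
  · exact ⟨9/10, ⟨by norm_num, by norm_num⟩, by rw [hF]; norm_num⟩
  · exact ⟨1/5, ⟨by norm_num, by norm_num⟩, by rw [hG]; norm_num⟩
  · rw [Set.eq_empty_iff_forall_notMem]
    rintro x ⟨⟨hx, hFx⟩, -, hGx⟩
    rw [hF] at hFx
    rw [hG] at hGx
    by_cases h : x ≤ 4/5
    · exact hFx (if_pos h)
    · exact hGx (if_neg (by push_neg at h ⊢; linarith))
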